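/- arXiv:2001.02425 — 2 statements merged into one kernel-verified Lean document; each statement's English description precedes it below -/
import Mathlib

section
/- Let L > n ≥ 1 be integers, let p, q be real parameters, and fix a position k with 1 ≤ k ≤ L−1. Then the weighted sum over configurations having an ordinary particle at distance k in front of the tracer satisfies: ∑_{a : a_k = 1} w_{p,q}(a) = ∑_{j=0}^{L−n−1} ∑_{r=0}^{j} C(L−1−k, r) · C(k−1, j−r) · p^r · q^{j−r} · R(L−j−1, n−1; p, q), where the left-hand sum runs over all words a of length L−1 with entries in {0,1} having exactly n ones and a_k = 1, and C(·,·) denotes the binomial coefficient. -/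
open Finset

/-- The stationary weight of a word `a` with entries in `{0,1}` (encoded as `Fin 2`):
the product over positions `i` with `a i = 0` of `1 + p·m_i(a) + q·n_i(a)`,
where `m_i(a)` (resp. `n_i(a)`) is the number of `1`'s strictly before (resp. after) `i`. -/
noncomputable def wt (p q : ℝ) {m : ℕ} (a : Fin m → Fin 2) : ℝ :=
  ∏ i ∈ univ.filter (fun i => a i = 0),
    (1 + p * ((univ.filter (fun j => j < i ∧ a j = 1)).card : ℝ)
       + q * ((univ.filter (fun j => i < j ∧ a j = 1)).card : ℝ))

/-- The number of `1`'s in the word `a`. -/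
def ones {m : ℕ} (a : Fin m → Fin 2) : ℕ := (univ.filter (fun i => a i = 1)).card

/-- The restricted partition function `R(L, n; p, q)`: the sum of the weights `wt p q a`
over all words `a` of length `L - 1` with entries in `{0,1}` having exactly `n` ones. -/
noncomputable def R (L n : ℕ) (p q : ℝ) : ℝ :=
  ∑ a ∈ univ.filter (fun a : Fin (L - 1) → Fin 2 => ones a = n), wt p q a

section Aux

lemma card_filter_emb {M m : ℕ} (s : Finset (Fin M)) (h : s.card = m)
    (P : Fin M → Prop) [DecidablePred P] :
    (univ.filter (fun i : Fin m => P (s.orderEmbOfFin h i))).card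
      = (s.filter P).card := by
  apply Finset.card_nbij (fun i => s.orderEmbOfFin h i)
  · intro i hi
    simp only [mem_filter, mem_univ, true_and] at hi ⊢
    exact Finset.mem_filter.mpr ⟨Finset.orderEmbOfFin_mem s h i, by simpa using hi⟩
  · exact fun i _ j _ hij => (s.orderEmbOfFin h).injective hij
  · intro x hx
    simp only [coe_filter, Set.mem_setOf_eq] at hx
    obtain ⟨i, rfl⟩ := Set.ext_iff.mp (Finset.range_orderEmbOfFin s h) x |>.mpr hx.1
    exact ⟨i, by simp [hx.2], rfl⟩

lemma wt_comp (p q : ℝ) {M m : ℕ} (s : Finset (Fin M)) (h : s.card = m) (a : Fin M → Fin 2) :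
    wt p q (fun i : Fin m => a (s.orderEmbOfFin h i)) =
    ∏ i ∈ s.filter (fun i => a i = 0),
      (1 + p * ((s.filter (fun j => j < i ∧ a j = 1)).card : ℝ)
         + q * ((s.filter (fun j => i < j ∧ a j = 1)).card : ℝ)) := by
  set f := s.orderEmbOfFin h with hf
  unfold wt
  apply Finset.prod_nbij (fun i => f i)
  · intro i hi
    simp only [mem_filter, mem_univ, true_and] at hi ⊢
    exact ⟨Finset.orderEmbOfFin_mem s h i, hi⟩
  · exact fun i _ j _ hij => f.injective hij
  · intro x hx
    simp only [coe_filter, Set.mem_setOf_eq] at hx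
    obtain ⟨i, rfl⟩ := Set.ext_iff.mp (Finset.range_orderEmbOfFin s h) x |>.mpr hx.1
    exact ⟨i, by simp [hx.2, hf], rfl⟩
  · intro i _
    have h1 : (univ.filter (fun j : Fin m => j < i ∧ a (f j) = 1)).card
        = (s.filter (fun j => j < f i ∧ a j = 1)).card := by
      rw [← card_filter_emb s h (fun j => j < f i ∧ a j = 1)]
      congr 1; ext j
      simp [hf, (s.orderEmbOfFin h).lt_iff_lt]
    have h2 : (univ.filter (fun j : Fin m => i < j ∧ a (f j) = 1)).card
        = (s.filter (fun j => f i < j ∧ a j = 1)).card := by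
      rw [← card_filter_emb s h (fun j => f i < j ∧ a j = 1)]
      congr 1; ext j
      simp [hf, (s.orderEmbOfFin h).lt_iff_lt]
    rw [h1, h2]

lemma inner_bij {M : ℕ} (p q : ℝ) (n : ℕ) (hn : 1 ≤ n) (κ : Fin M) (T : Finset (Fin M))
    (hκT : κ ∉ T) {m : ℕ} (hm : ((insert κ T)ᶜ : Finset (Fin M)).card = m) :
    (∑ a ∈ univ.filter (fun a : Fin M → Fin 2 => (ones a = n ∧ a κ = 1) ∧ ∀ i ∈ T, a i = 0),
      ∏ i ∈ (univ.filter (fun i => a i = 0)) \ T,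
        (1 + p * ((univ.filter (fun j => (j < i ∧ a j = 1) ∧ j ≠ κ)).card : ℝ)
           + q * ((univ.filter (fun j => (i < j ∧ a j = 1) ∧ j ≠ κ)).card : ℝ)))
    = ∑ b ∈ univ.filter (fun b : Fin m → Fin 2 => ones b = n - 1), wt p q b := by
  classical
  set s : Finset (Fin M) := (insert κ T)ᶜ with hsdef
  set f := s.orderEmbOfFin hm with hfdef
  have hκs : κ ∉ s := by simp [hsdef]
  have hTs : ∀ i ∈ T, i ∉ s := fun i hi => by simp [hsdef, hi]
  have hmem_s : ∀ i : Fin M, i ∈ s ↔ (i ≠ κ ∧ i ∉ T) := by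
    intro i; simp [hsdef, not_or]
  set restr : (Fin M → Fin 2) → (Fin m → Fin 2) := fun a i => a (f i) with hrestr
  set ext : (Fin m → Fin 2) → (Fin M → Fin 2) := fun b i =>
    if hi : i ∈ s then b ((s.orderIsoOfFin hm).symm ⟨i, hi⟩) else if i = κ then 1 else 0
    with hext
  have hfs : ∀ i, f i ∈ s := fun i => Finset.orderEmbOfFin_mem s hm i
  have hf_iso : ∀ (x : Fin M) (hx : x ∈ s), f ((s.orderIsoOfFin hm).symm ⟨x, hx⟩) = x := by
    intro x hx
    rw [hfdef, ← Finset.coe_orderIsoOfFin_apply, OrderIso.apply_symm_apply]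
  have hre : ∀ b, restr (ext b) = b := by
    intro b; funext i
    have h1 : f i ∈ s := hfs i
    simp only [hrestr, hext, dif_pos h1]
    congr 1
    have : (⟨f i, h1⟩ : {x // x ∈ s}) = s.orderIsoOfFin hm i := by
      apply Subtype.ext; rw [Finset.coe_orderIsoOfFin_apply]
    rw [this, OrderIso.symm_apply_apply]
  have her : ∀ a : Fin M → Fin 2, a κ = 1 → (∀ i ∈ T, a i = 0) → ext (restr a) = a := by
    intro a haκ haT; funext i
    by_cases hi : i ∈ s
    · simp only [hext, dif_pos hi, hrestr, hf_iso i hi]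
    · simp only [hext, dif_neg hi]
      by_cases hiκ : i = κ
      · subst hiκ; simp [haκ]
      · have hiT : i ∈ T := by
          by_contra hT
          exact hi ((hmem_s i).mpr ⟨hiκ, hT⟩)
        simp [hiκ, haT i hiT]
  have hones_restr : ∀ a : Fin M → Fin 2, ones (restr a) = (s.filter (fun i => a i = 1)).card := by
    intro a
    exact card_filter_emb s hm (fun i => a i = 1)
  apply Finset.sum_nbij' restr ext
  · intro a ha
    simp only [mem_filter, mem_univ, true_and] at ha ⊢
    obtain ⟨⟨hone, haκ⟩, haT⟩ := ha
    rw [hones_restr]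
    have : s.filter (fun i => a i = 1) = (univ.filter (fun i => a i = 1)).erase κ := by
      ext j
      simp only [mem_filter, mem_erase, mem_univ, true_and, hmem_s]
      constructor
      · rintro ⟨⟨h1, _⟩, h2⟩; exact ⟨h1, h2⟩
      · rintro ⟨h1, h2⟩
        exact ⟨⟨h1, fun hjT => by simp [haT j hjT] at h2⟩, h2⟩
    rw [this, Finset.card_erase_of_mem (by simp [haκ]), ← hone]
    rfl
  · intro b hb
    simp only [mem_filter, mem_univ, true_and] at hb ⊢
    have hbκ : ext b κ = 1 := by simp [hext, hκs]
    have hbT : ∀ i ∈ T, ext b i = 0 := by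
      intro i hi
      have hiκ : i ≠ κ := fun h => hκT (h ▸ hi)
      simp [hext, hTs i hi, hiκ]
    refine ⟨⟨?_, hbκ⟩, hbT⟩
    have hsplit : (univ : Finset (Fin M)).filter (fun i => ext b i = 1)
        = (s.filter (fun i => ext b i = 1)) ∪ (sᶜ.filter (fun i => ext b i = 1)) := by
      rw [← Finset.filter_union, Finset.union_compl]
    have hdisj : Disjoint (s.filter (fun i => ext b i = 1)) (sᶜ.filter (fun i => ext b i = 1)) :=
      Finset.disjoint_filter_filter (disjoint_compl_right)
    have h1 : (s.filter (fun i => ext b i = 1)).card = n - 1 := by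
      rw [← hones_restr (ext b), hre b, hb]
    have h2 : sᶜ.filter (fun i => ext b i = 1) = {κ} := by
      ext j
      simp only [hsdef, compl_compl, mem_filter, mem_singleton]
      constructor
      · rintro ⟨hj, hj1⟩
        rcases Finset.mem_insert.mp hj with h | h
        · exact h
        · exact absurd hj1 (by rw [hbT j h]; decide)
      · rintro rfl; exact ⟨Finset.mem_insert_self _ _, hbκ⟩
    unfold ones
    rw [hsplit, Finset.card_union_of_disjoint hdisj, h1, h2, Finset.card_singleton]
    omega
  · intro a ha
    simp only [mem_filter, mem_univ, true_and] at ha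
    exact her a ha.1.2 ha.2
  · intro b _
    exact hre b
  · intro a ha
    simp only [mem_filter, mem_univ, true_and] at ha
    obtain ⟨⟨hone, haκ⟩, haT⟩ := ha
    rw [show restr a = (fun i : Fin m => a (f i)) from rfl, wt_comp p q s hm a]
    have hset : (univ.filter (fun i => a i = 0)) \ T = s.filter (fun i => a i = 0) := by
      ext i
      simp only [mem_sdiff, mem_filter, mem_univ, true_and, hmem_s]
      constructor
      · rintro ⟨h0, hT⟩
        exact ⟨⟨fun hiκ => by simp [hiκ, haκ] at h0, hT⟩, h0⟩
      · rintro ⟨⟨_, hT⟩, h0⟩; exact ⟨h0, hT⟩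
    rw [hset]
    apply Finset.prod_congr rfl
    intro i hi
    have hc1 : (univ.filter (fun j => (j < i ∧ a j = 1) ∧ j ≠ κ)).card
        = (s.filter (fun j => j < i ∧ a j = 1)).card := by
      congr 1; ext j
      simp only [mem_filter, mem_univ, true_and, hmem_s]
      constructor
      · rintro ⟨⟨hlt, h1⟩, hne⟩
        exact ⟨⟨hne, fun hjT => by simp [haT j hjT] at h1⟩, hlt, h1⟩
      · rintro ⟨⟨hne, _⟩, hlt, h1⟩; exact ⟨⟨hlt, h1⟩, hne⟩
    have hc2 : (univ.filter (fun j => (i < j ∧ a j = 1) ∧ j ≠ κ)).card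
        = (s.filter (fun j => i < j ∧ a j = 1)).card := by
      congr 1; ext j
      simp only [mem_filter, mem_univ, true_and, hmem_s]
      constructor
      · rintro ⟨⟨hlt, h1⟩, hne⟩
        exact ⟨⟨hne, fun hjT => by simp [haT j hjT] at h1⟩, hlt, h1⟩
      · rintro ⟨⟨hne, _⟩, hlt, h1⟩; exact ⟨⟨hlt, h1⟩, hne⟩
    rw [hc1, hc2]

lemma count_two {ι : Type*} [DecidableEq ι] (p q : ℝ) (t₁ t₂ : Finset ι)
    (hd : Disjoint t₁ t₂) (e : ι → ℝ) (h₁ : ∀ i ∈ t₁, e i = p) (h₂ : ∀ i ∈ t₂, e i = q)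
    (j : ℕ) :
    ∑ T ∈ (t₁ ∪ t₂).powersetCard j, ∏ i ∈ T, e i
      = ∑ r ∈ Finset.range (j + 1),
          (t₁.card.choose r : ℝ) * (t₂.card.choose (j - r) : ℝ) * p ^ r * q ^ (j - r) := by
  classical
  have key : ∑ T ∈ (t₁ ∪ t₂).powersetCard j, ∏ i ∈ T, e i
      = ∑ x ∈ (Finset.range (j + 1)).sigma
          (fun r => t₁.powersetCard r ×ˢ t₂.powersetCard (j - r)),
          p ^ x.1 * q ^ (j - x.1) := by
    apply Finset.sum_nbij' (fun T => (⟨(T ∩ t₁).card, (T ∩ t₁, T ∩ t₂)⟩ :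
        (r : ℕ) × (Finset ι × Finset ι))) (fun x => x.2.1 ∪ x.2.2)
    · intro T hT
      rw [mem_powersetCard] at hT
      obtain ⟨hsub, hcard⟩ := hT
      have hTsplit : (T ∩ t₁) ∪ (T ∩ t₂) = T := by
        rw [← Finset.inter_union_distrib_left]
        exact Finset.inter_eq_left.mpr hsub
      have hdisj : Disjoint (T ∩ t₁) (T ∩ t₂) :=
        hd.mono Finset.inter_subset_right Finset.inter_subset_right
      have hcards : (T ∩ t₁).card + (T ∩ t₂).card = j := by
        rw [← Finset.card_union_of_disjoint hdisj, hTsplit, hcard]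
      simp only [Finset.mem_sigma, Finset.mem_range, Finset.mem_product, mem_powersetCard]
      refine ⟨by omega, ⟨Finset.inter_subset_right, ?_⟩,
        ⟨Finset.inter_subset_right, by omega⟩⟩
      trivial
    · intro x hx
      simp only [Finset.mem_sigma, Finset.mem_range, Finset.mem_product, mem_powersetCard] at hx
      obtain ⟨hr, ⟨hs1, hc1⟩, hs2, hc2⟩ := hx
      rw [mem_powersetCard]
      have hdisj : Disjoint x.2.1 x.2.2 := hd.mono hs1 hs2
      constructor
      · exact Finset.union_subset
          (hs1.trans Finset.subset_union_left) (hs2.trans Finset.subset_union_right)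
      · rw [Finset.card_union_of_disjoint hdisj, hc1, hc2]; omega
    · intro T hT
      rw [mem_powersetCard] at hT
      rw [← Finset.inter_union_distrib_left]
      exact Finset.inter_eq_left.mpr hT.1
    · rintro ⟨r, T₁, T₂⟩ hx
      simp only [Finset.mem_sigma, Finset.mem_range, Finset.mem_product, mem_powersetCard] at hx
      obtain ⟨hr, ⟨hs1, hc1⟩, hs2, hc2⟩ := hx
      have h21 : T₂ ∩ t₁ = ∅ := by
        apply Finset.eq_empty_of_forall_notMem
        intro a ha
        rw [Finset.mem_inter] at ha
        exact Finset.disjoint_left.mp hd ha.2 (hs2 ha.1)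
      have h12 : T₁ ∩ t₂ = ∅ := by
        apply Finset.eq_empty_of_forall_notMem
        intro a ha
        rw [Finset.mem_inter] at ha
        exact Finset.disjoint_left.mp hd (hs1 ha.1) ha.2
      have e1 : (T₁ ∪ T₂) ∩ t₁ = T₁ := by
        rw [Finset.union_inter_distrib_right, Finset.inter_eq_left.mpr hs1, h21,
          Finset.union_empty]
      have e2 : (T₁ ∪ T₂) ∩ t₂ = T₂ := by
        rw [Finset.union_inter_distrib_right, h12, Finset.inter_eq_left.mpr hs2,
          Finset.empty_union]
      simp only [e1, e2, hc1]
    · intro T hT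
      rw [mem_powersetCard] at hT
      obtain ⟨hsub, hcard⟩ := hT
      have hTsplit : (T ∩ t₁) ∪ (T ∩ t₂) = T := by
        rw [← Finset.inter_union_distrib_left]
        exact Finset.inter_eq_left.mpr hsub
      have hdisj : Disjoint (T ∩ t₁) (T ∩ t₂) :=
        hd.mono Finset.inter_subset_right Finset.inter_subset_right
      have hcards : (T ∩ t₁).card + (T ∩ t₂).card = j := by
        rw [← Finset.card_union_of_disjoint hdisj, hTsplit, hcard]
      rw [show (∏ i ∈ T, e i) = ∏ i ∈ (T ∩ t₁) ∪ (T ∩ t₂), e i by rw [hTsplit],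
        Finset.prod_union hdisj]
      have p1 : ∏ i ∈ T ∩ t₁, e i = p ^ (T ∩ t₁).card := by
        rw [Finset.prod_congr rfl (fun i hi => h₁ i (Finset.mem_inter.mp hi).2),
          Finset.prod_const]
      have p2 : ∏ i ∈ T ∩ t₂, e i = q ^ (T ∩ t₂).card := by
        rw [Finset.prod_congr rfl (fun i hi => h₂ i (Finset.mem_inter.mp hi).2),
          Finset.prod_const]
      rw [p1, p2, show (T ∩ t₂).card = j - (T ∩ t₁).card by omega]
  rw [key, Finset.sum_sigma]
  apply Finset.sum_congr rfl
  intro r _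
  show ∑ _s ∈ t₁.powersetCard r ×ˢ t₂.powersetCard (j - r), p ^ r * q ^ (j - r) = _
  rw [Finset.sum_const, Finset.card_product, Finset.card_powersetCard,
    Finset.card_powersetCard, nsmul_eq_mul]
  push_cast
  ring

lemma card_split {M : ℕ} (κ : Fin M) (a : Fin M → Fin 2) (hκ : a κ = 1)
    (P : Fin M → Prop) [DecidablePred P] :
    ((univ : Finset (Fin M)).filter (fun j => P j ∧ a j = 1)).card
      = (univ.filter (fun j => (P j ∧ a j = 1) ∧ j ≠ κ)).card + (if P κ then 1 else 0) := by
  classical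
  have h := Finset.card_filter_add_card_filter_not
    (s := (univ : Finset (Fin M)).filter (fun j => P j ∧ a j = 1)) (p := fun j => j ≠ κ)
  rw [Finset.filter_filter, Finset.filter_filter] at h
  have h2 : (univ : Finset (Fin M)).filter (fun j => (P j ∧ a j = 1) ∧ ¬ j ≠ κ)
      = if P κ then {κ} else ∅ := by
    by_cases hP : P κ
    · rw [if_pos hP]; ext j
      simp only [mem_filter, mem_univ, true_and, mem_singleton, not_not]
      constructor
      · rintro ⟨_, h⟩; exact h
      · rintro rfl; exact ⟨⟨hP, hκ⟩, rfl⟩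
    · rw [if_neg hP]; ext j
      simp only [mem_filter, mem_univ, true_and, notMem_empty, not_not, iff_false, not_and]
      rintro ⟨hPj, _⟩ rfl; exact hP hPj
  rw [h2] at h
  by_cases hP : P κ <;> simp [hP] at h ⊢ <;> omega

lemma R_eq_zero (L' n' : ℕ) (p q : ℝ) (h : L' - 1 < n') : R L' n' p q = 0 := by
  rw [R]
  convert Finset.sum_empty
  rw [Finset.filter_eq_empty_iff]
  intro a _
  intro hone
  have h1 : ones a ≤ L' - 1 := by
    unfold ones
    calc (univ.filter (fun i : Fin (L'-1) => a i = 1)).card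
        ≤ (univ : Finset (Fin (L'-1))).card := Finset.card_filter_le _ _
      _ = L' - 1 := by rw [Finset.card_univ, Fintype.card_fin]
  omega

end Aux

/-- the weighted sum over configurations having an ordinary particle at
distance `k` in front of the tracer (word position `k`, i.e. index `k - 1`). -/
theorem density_front (L n k : ℕ) (hn1 : 1 ≤ n) (hnL : n < L) (hk1 : 1 ≤ k)
    (hk2 : k ≤ L - 1) (p q : ℝ) :
    (∑ a ∈ univ.filter (fun a : Fin (L - 1) → Fin 2 =>
        ones a = n ∧ a ⟨k - 1, by omega⟩ = 1), wt p q a)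
    = ∑ j ∈ Finset.range (L - n), ∑ r ∈ Finset.range (j + 1),
        (Nat.choose (L - 1 - k) r : ℝ) * (Nat.choose (k - 1) (j - r) : ℝ)
          * p ^ r * q ^ (j - r) * R (L - j - 1) (n - 1) p q := by
  classical
  have hL2 : 2 ≤ L := by omega
  set κ : Fin (L - 1) := ⟨k - 1, by omega⟩ with hκdef
  -- Step 1: expansion of the weight
  have key : ∀ a : Fin (L - 1) → Fin 2, a κ = 1 →
      wt p q a = ∑ T ∈ ((univ : Finset (Fin (L - 1))).erase κ).powerset,
        (if T ⊆ univ.filter (fun i => a i = 0) then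
          (∏ i ∈ T, (if κ < i then p else q)) *
          ∏ i ∈ (univ.filter (fun i => a i = 0)) \ T,
            (1 + p * ((univ.filter (fun j => (j < i ∧ a j = 1) ∧ j ≠ κ)).card : ℝ)
               + q * ((univ.filter (fun j => (i < j ∧ a j = 1) ∧ j ≠ κ)).card : ℝ))
         else 0) := by
    intro a haκ
    have hfac : ∀ i ∈ univ.filter (fun i : Fin (L - 1) => a i = 0),
        (1 + p * ((univ.filter (fun j => j < i ∧ a j = 1)).card : ℝ)
           + q * ((univ.filter (fun j => i < j ∧ a j = 1)).card : ℝ))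
        = (if κ < i then p else q)
          + (1 + p * ((univ.filter (fun j => (j < i ∧ a j = 1) ∧ j ≠ κ)).card : ℝ)
               + q * ((univ.filter (fun j => (i < j ∧ a j = 1) ∧ j ≠ κ)).card : ℝ)) := by
      intro i hi
      rw [mem_filter] at hi
      have hiκ : i ≠ κ := by
        intro h; rw [h, haκ] at hi; exact absurd hi.2 (by decide)
      have hm := card_split κ a haκ (fun j => j < i)
      have hn := card_split κ a haκ (fun j => i < j)
      rcases lt_or_gt_of_ne hiκ with h | h
      · rw [if_neg (asymm h)] at hm ⊢
        rw [if_pos h] at hn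
        rw [hm, hn]
        push_cast
        ring
      · rw [if_pos h] at hm ⊢
        rw [if_neg (asymm h)] at hn
        rw [hm, hn]
        push_cast
        ring
    unfold wt
    rw [Finset.prod_congr rfl hfac, Finset.prod_add]
    have hZsub : (univ.filter (fun i => a i = 0)) ⊆ (univ : Finset (Fin (L - 1))).erase κ := by
      intro i hi
      rw [mem_filter] at hi
      refine mem_erase.mpr ⟨?_, mem_univ i⟩
      intro h; rw [h, haκ] at hi; exact absurd hi.2 (by decide)
    have hZ : (univ.filter (fun i => a i = 0)).powerset
        = ((univ : Finset (Fin (L - 1))).erase κ).powerset.filter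
            (fun T => T ⊆ univ.filter (fun i => a i = 0)) := by
      ext T
      simp only [mem_powerset, mem_filter]
      exact ⟨fun h => ⟨h.trans hZsub, h⟩, And.right⟩
    rw [hZ, Finset.sum_filter]
  calc (∑ a ∈ univ.filter (fun a : Fin (L - 1) → Fin 2 => ones a = n ∧ a κ = 1), wt p q a)
      = ∑ a ∈ univ.filter (fun a : Fin (L - 1) → Fin 2 => ones a = n ∧ a κ = 1),
          ∑ T ∈ ((univ : Finset (Fin (L - 1))).erase κ).powerset,
        (if T ⊆ univ.filter (fun i => a i = 0) then
          (∏ i ∈ T, (if κ < i then p else q)) *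
          ∏ i ∈ (univ.filter (fun i => a i = 0)) \ T,
            (1 + p * ((univ.filter (fun j => (j < i ∧ a j = 1) ∧ j ≠ κ)).card : ℝ)
               + q * ((univ.filter (fun j => (i < j ∧ a j = 1) ∧ j ≠ κ)).card : ℝ))
         else 0) := by
        apply Finset.sum_congr rfl
        intro a ha
        rw [mem_filter] at ha
        exact key a ha.2.2
    _ = ∑ T ∈ ((univ : Finset (Fin (L - 1))).erase κ).powerset,
          ∑ a ∈ univ.filter (fun a : Fin (L - 1) → Fin 2 => ones a = n ∧ a κ = 1),
        (if T ⊆ univ.filter (fun i => a i = 0) then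
          (∏ i ∈ T, (if κ < i then p else q)) *
          ∏ i ∈ (univ.filter (fun i => a i = 0)) \ T,
            (1 + p * ((univ.filter (fun j => (j < i ∧ a j = 1) ∧ j ≠ κ)).card : ℝ)
               + q * ((univ.filter (fun j => (i < j ∧ a j = 1) ∧ j ≠ κ)).card : ℝ))
         else 0) := Finset.sum_comm
    _ = ∑ T ∈ ((univ : Finset (Fin (L - 1))).erase κ).powerset,
          (∏ i ∈ T, (if κ < i then p else q)) * R (L - T.card - 1) (n - 1) p q := by
        apply Finset.sum_congr rfl
        intro T hT
        have hκT : κ ∉ T := fun h =>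
          absurd (Finset.mem_erase.mp (Finset.mem_powerset.mp hT h)).1 (by simp)
        rw [← Finset.sum_filter]
        have hAf : (univ.filter (fun a : Fin (L - 1) → Fin 2 => ones a = n ∧ a κ = 1)).filter
            (fun a => T ⊆ univ.filter (fun i => a i = 0))
            = univ.filter (fun a : Fin (L - 1) → Fin 2 =>
                (ones a = n ∧ a κ = 1) ∧ ∀ i ∈ T, a i = 0) := by
          rw [Finset.filter_filter]
          apply Finset.filter_congr
          intro a _
          constructor
          · rintro ⟨h1, h2⟩
            exact ⟨h1, fun i hi => (Finset.mem_filter.mp (h2 hi)).2⟩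
          · rintro ⟨h1, h2⟩
            exact ⟨h1, fun i hi => Finset.mem_filter.mpr ⟨mem_univ i, h2 i hi⟩⟩
        rw [hAf, ← Finset.mul_sum]
        congr 1
        have hm' : ((insert κ T)ᶜ : Finset (Fin (L - 1))).card = (L - T.card - 1) - 1 := by
          rw [Finset.card_compl, Finset.card_insert_of_notMem hκT, Fintype.card_fin]
          omega
        rw [show R (L - T.card - 1) (n - 1) p q = ∑ b ∈ univ.filter
            (fun b : Fin (L - T.card - 1 - 1) → Fin 2 => ones b = n - 1), wt p q b from rfl]
        exact inner_bij p q n hn1 κ T hκT hm'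
    _ = ∑ j ∈ Finset.range (L - 1),
          (∑ r ∈ Finset.range (j + 1),
            (Nat.choose (L - 1 - k) r : ℝ) * (Nat.choose (k - 1) (j - r) : ℝ)
              * p ^ r * q ^ (j - r)) * R (L - j - 1) (n - 1) p q := by
        rw [Finset.sum_powerset]
        have hcard : ((univ : Finset (Fin (L - 1))).erase κ).card = L - 2 := by
          rw [Finset.card_erase_of_mem (mem_univ κ), Finset.card_univ, Fintype.card_fin]
          omega
        rw [hcard, show L - 2 + 1 = L - 1 from by omega]
        apply Finset.sum_congr rfl
        intro j hj
        have hstep : ∑ T ∈ Finset.powersetCard j ((univ : Finset (Fin (L - 1))).erase κ),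
            (∏ i ∈ T, (if κ < i then p else q)) * R (L - T.card - 1) (n - 1) p q
            = ∑ T ∈ Finset.powersetCard j ((univ : Finset (Fin (L - 1))).erase κ),
            (∏ i ∈ T, (if κ < i then p else q)) * R (L - j - 1) (n - 1) p q :=
          Finset.sum_congr rfl (fun T hT => by rw [(Finset.mem_powersetCard.mp hT).2])
        rw [hstep, ← Finset.sum_mul]
        congr 1
        have hsplit : (univ : Finset (Fin (L - 1))).erase κ
            = (univ.filter (fun i => κ < i)) ∪ (univ.filter (fun i => i < κ)) := by
          ext i
          simp only [mem_erase, mem_union, mem_filter, mem_univ, true_and, and_true]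
          constructor
          · intro h; exact (lt_or_gt_of_ne h).symm.imp id id
          · rintro (h | h)
            · exact ne_of_gt h
            · exact ne_of_lt h
        have hdisj : Disjoint ((univ : Finset (Fin (L - 1))).filter (fun i => κ < i))
            (univ.filter (fun i => i < κ)) := by
          rw [Finset.disjoint_left]
          intro i h1 h2
          rw [mem_filter] at h1 h2
          exact absurd (h1.2.trans h2.2) (lt_irrefl κ)
        rw [hsplit, count_two p q _ _ hdisj _
          (fun i hi => if_pos (Finset.mem_filter.mp hi).2)
          (fun i hi => if_neg (asymm (Finset.mem_filter.mp hi).2)) j]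
        have hc1 : ((univ : Finset (Fin (L - 1))).filter (fun i => κ < i)).card = L - 1 - k := by
          rw [Finset.filter_lt_eq_Ioi, Fin.card_Ioi]
          show L - 1 - 1 - (k - 1) = L - 1 - k
          omega
        have hc2 : ((univ : Finset (Fin (L - 1))).filter (fun i => i < κ)).card = k - 1 := by
          rw [Finset.filter_gt_eq_Iio, Fin.card_Iio]
        rw [hc1, hc2]
    _ = ∑ j ∈ Finset.range (L - n),
          (∑ r ∈ Finset.range (j + 1),
            (Nat.choose (L - 1 - k) r : ℝ) * (Nat.choose (k - 1) (j - r) : ℝ)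
              * p ^ r * q ^ (j - r)) * R (L - j - 1) (n - 1) p q := by
        symm
        apply Finset.sum_subset (Finset.range_subset_range.mpr (by omega : L - n ≤ L - 1))
        intro j hj1 hj2
        rw [Finset.mem_range] at hj1 hj2
        rw [R_eq_zero _ _ _ _ (by omega : (L - j - 1) - 1 < n - 1), mul_zero]
    _ = ∑ j ∈ Finset.range (L - n), ∑ r ∈ Finset.range (j + 1),
        (Nat.choose (L - 1 - k) r : ℝ) * (Nat.choose (k - 1) (j - r) : ℝ)
          * p ^ r * q ^ (j - r) * R (L - j - 1) (n - 1) p q := by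
        apply Finset.sum_congr rfl
        intro j _
        rw [Finset.sum_mul]
end

section
/- Let L > n ≥ 1 be integers and let p, q be real parameters with q ≠ −1. Then the weighted sum over configurations whose last site (immediately behind the tracer) is occupied satisfies: ∑_{a : a_{L−1} = 1} w_{p,q}(a) = (1+q)^{L−n−1} · R(L−1, n−1; p/(1+q), q/(1+q)), where the sum runs over all words a of length L−1 with entries in {0,1} having exactly n ones and a_{L−1} = 1. -/
open Finset

lemma fin2_ne (x : Fin 2) : ¬ x = 0 ↔ x = 1 := by revert x; decide

lemma ones_snoc {m : ℕ} (b : Fin m → Fin 2) : ones (Fin.snoc b 1) = ones b + 1 := by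
  unfold ones
  rw [Finset.card_filter, Finset.card_filter, Fin.sum_univ_castSucc]
  simp [Fin.snoc_castSucc, Fin.snoc_last]

lemma card_zeros {m : ℕ} (b : Fin m → Fin 2) :
    (univ.filter (fun i => b i = 0)).card = m - ones b := by
  have h := Finset.card_filter_add_card_filter_not (s := (univ : Finset (Fin m)))
    (p := fun i => b i = (0 : Fin 2))
  have h2 : (univ.filter (fun i => ¬ b i = (0:Fin 2))) = univ.filter (fun i => b i = 1) :=
    Finset.filter_congr fun i _ => by simp [fin2_ne]
  rw [h2] at h
  have : (univ : Finset (Fin m)).card = m := by simp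
  unfold ones
  omega

lemma before_snoc {m : ℕ} (b : Fin m → Fin 2) (i : Fin m) :
    (univ.filter (fun j : Fin (m+1) => j < i.castSucc ∧ (Fin.snoc b 1 : Fin (m+1) → Fin 2) j = 1)).card
    = (univ.filter (fun j : Fin m => j < i ∧ b j = 1)).card := by
  rw [Finset.card_filter, Finset.card_filter, Fin.sum_univ_castSucc]
  have hlast : ¬ (Fin.last m < i.castSucc) := by
    exact not_lt.mpr (Fin.castSucc_lt_last i).le
  simp [Fin.snoc_castSucc, Fin.snoc_last, Fin.castSucc_lt_castSucc_iff, hlast]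

lemma after_snoc {m : ℕ} (b : Fin m → Fin 2) (i : Fin m) :
    (univ.filter (fun j : Fin (m+1) => i.castSucc < j ∧ (Fin.snoc b 1 : Fin (m+1) → Fin 2) j = 1)).card
    = (univ.filter (fun j : Fin m => i < j ∧ b j = 1)).card + 1 := by
  rw [Finset.card_filter, Finset.card_filter, Fin.sum_univ_castSucc]
  simp [Fin.snoc_castSucc, Fin.snoc_last, Fin.castSucc_lt_castSucc_iff,
    Fin.castSucc_lt_last]

lemma wt_snoc {m : ℕ} (p q : ℝ) (hq : 1 + q ≠ 0) (b : Fin m → Fin 2) :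
    wt p q (Fin.snoc b 1) = (1+q)^(m - ones b) * wt (p/(1+q)) (q/(1+q)) b := by
  unfold wt
  rw [Finset.prod_filter, Finset.prod_filter, Fin.prod_univ_castSucc]
  have hone : ¬((1 : Fin 2) = 0) := by decide
  rw [Fin.snoc_last (α := fun _ => Fin 2), if_neg hone, mul_one]
  have step : ∀ i : Fin m,
      (if (Fin.snoc b 1 : Fin (m+1) → Fin 2) i.castSucc = 0 then
        (1 + p * ((univ.filter (fun j : Fin (m+1) => j < i.castSucc ∧ (Fin.snoc b 1 : Fin (m+1) → Fin 2) j = 1)).card : ℝ)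
           + q * ((univ.filter (fun j : Fin (m+1) => i.castSucc < j ∧ (Fin.snoc b 1 : Fin (m+1) → Fin 2) j = 1)).card : ℝ))
        else 1)
      = (1+q) ^ (if b i = 0 then 1 else 0) *
        (if b i = 0 then
          (1 + (p/(1+q)) * ((univ.filter (fun j : Fin m => j < i ∧ b j = 1)).card : ℝ)
             + (q/(1+q)) * ((univ.filter (fun j : Fin m => i < j ∧ b j = 1)).card : ℝ))
          else 1) := by
    intro i
    rw [Fin.snoc_castSucc (α := fun _ => Fin 2)]
    by_cases h : b i = 0
    · rw [if_pos h, if_pos h, if_pos h, pow_one, before_snoc, after_snoc]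
      push_cast
      field_simp
      ring
    · rw [if_neg h, if_neg h, if_neg h, pow_zero, one_mul]
  rw [Finset.prod_congr rfl (fun i _ => step i), Finset.prod_mul_distrib,
    Finset.prod_pow_eq_pow_sum, ← Finset.card_filter, card_zeros]

lemma key (M m n : ℕ) (hM : M = m + 1) (p q : ℝ) (hq : 1 + q ≠ 0) :
    (∑ a ∈ univ.filter (fun a : Fin M → Fin 2 => ones a = n + 1 ∧ a ⟨m, by omega⟩ = 1), wt p q a)
    = (1+q)^(m - n) * ∑ b ∈ univ.filter (fun b : Fin m → Fin 2 => ones b = n),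
        wt (p/(1+q)) (q/(1+q)) b := by
  subst hM
  have hlast : (⟨m, by omega⟩ : Fin (m+1)) = Fin.last m := rfl
  rw [Finset.mul_sum]
  refine Finset.sum_nbij' (fun a => Fin.init a) (fun b => Fin.snoc b 1) ?_ ?_ ?_ ?_ ?_
  · intro a ha
    simp only [Finset.mem_filter, Finset.mem_univ, true_and, hlast] at ha ⊢
    obtain ⟨h1, h2⟩ := ha
    have hs : Fin.snoc (Fin.init a) (1 : Fin 2) = a := by
      conv_rhs => rw [← Fin.snoc_init_self a]
      rw [h2]
    have := ones_snoc (Fin.init a)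
    rw [hs] at this
    omega
  · intro b hb
    simp only [Finset.mem_filter, Finset.mem_univ, true_and, hlast] at hb ⊢
    exact ⟨by rw [ones_snoc, hb], Fin.snoc_last _ _⟩
  · intro a ha
    simp only [Finset.mem_filter, Finset.mem_univ, true_and, hlast] at ha
    conv_rhs => rw [← Fin.snoc_init_self a]
    rw [ha.2]
  · intro b _
    exact Fin.init_snoc _ _
  · intro a ha
    simp only [Finset.mem_filter, Finset.mem_univ, true_and, hlast] at ha
    obtain ⟨h1, h2⟩ := ha
    have hs : Fin.snoc (Fin.init a) (1 : Fin 2) = a := by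
      conv_rhs => rw [← Fin.snoc_init_self a]
      rw [h2]
    have hwt := wt_snoc p q hq (Fin.init a)
    rw [hs] at hwt
    have hob : ones (Fin.init a) = n := by
      have := ones_snoc (Fin.init a); rw [hs] at this; omega
    rw [hwt, hob]

/-- the weighted sum over configurations whose last site (immediately
behind the tracer, word position `L - 1`, i.e. index `L - 2`) is occupied. -/
theorem density_last (L n : ℕ) (hn1 : 1 ≤ n) (hnL : n < L) (p q : ℝ) (hq : q ≠ -1) :
    (∑ a ∈ univ.filter (fun a : Fin (L - 1) → Fin 2 =>
        ones a = n ∧ a ⟨L - 2, by omega⟩ = 1), wt p q a)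
    = (1 + q) ^ (L - n - 1) * R (L - 1) (n - 1) (p / (1 + q)) (q / (1 + q)) := by
  have hq' : (1 : ℝ) + q ≠ 0 := by intro h; apply hq; linarith
  obtain ⟨n', rfl⟩ : ∃ n', n = n' + 1 := ⟨n - 1, by omega⟩
  have hE : L - (n' + 1) - 1 = (L - 2) - n' := by omega
  rw [hE, show n' + 1 - 1 = n' from rfl, R]
  exact key (L - 1) (L - 2) n' (by omega) p q hq'
end
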